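/- In the setting of the proof of Lemma 3 (minimum co-degree > (1-β)n/k, maximum matching M of size m < n, independent leftover set U, and sets C_j of vertices in V_j extending one of k fixed disjoint legal (k-1)-sets in U): each edge of M contains at most one vertex of C = ⋃_j C_j; consequently Σ_j |C_j| ≤ m < n, and combined with |C_j| > (1-β)n/k for all j, one gets |C_l| < (1 + (k-1)β)n/k for every l ∈ [k]. -/

import Mathlib

/-- In the setting of Lemma 3's proof: with a maximum matching M of size
m < n and k² disjoint legal (k-1)-sets A_i^j in U = V(H) - V(M) with A_i^j ∩ V_j = ∅,
and C_j = {v ∈ V_j : A_i^j ∪ {v} ∈ E for some i}: every edge of M contains at most one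
vertex of C = ⋃_j C_j, hence Σ_j |C_j| ≤ m, and |C_l| < (1+(k-1)β)n/k for every l. -/
theorem stmt5 {α : Type*} [Fintype α] [DecidableEq α]
    (k n : ℕ) (hk : 1 ≤ k) (β : ℝ) (hβ0 : 0 < β) (hβ1 : β < 1 / (2 * (k : ℝ)^2))
    (P : Fin k → Finset α)
    (hP : ∀ v : α, ∃! i, v ∈ P i)
    (hPcard : ∀ i, (P i).card = n)
    (E : Finset (Finset α))
    (hE : ∀ e ∈ E, ∀ i, (e ∩ P i).card = 1)
    (hdeg : ∀ S : Finset α, S.card = k - 1 → (∀ i, (S ∩ P i).card ≤ 1) →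
      (1 - β) * n / k < ((Finset.univ.filter (fun v => insert v S ∈ E)).card : ℝ))
    (M : Finset (Finset α)) (hME : M ⊆ E)
    (hMd : ∀ e ∈ M, ∀ f ∈ M, e ≠ f → Disjoint e f)
    (hMmax : ∀ M' ⊆ E, (∀ e ∈ M', ∀ f ∈ M', e ≠ f → Disjoint e f) → M'.card ≤ M.card)
    (hm : M.card < n)
    (A : Fin k → Fin k → Finset α)
    (hAU : ∀ i j, ∀ v ∈ A i j, v ∉ M.biUnion id)
    (hAcard : ∀ i j, (A i j).card = k - 1)
    (hAleg : ∀ i j l, (A i j ∩ P l).card ≤ 1)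
    (hAj : ∀ i j, A i j ∩ P j = ∅)
    (hAdisj : ∀ i j i' j', (i, j) ≠ (i', j') → Disjoint (A i j) (A i' j'))
    (C : Fin k → Finset α)
    (hC : ∀ j, C j = (P j).filter (fun v => ∃ i, insert v (A i j) ∈ E)) :
    (∀ e ∈ M, (e ∩ Finset.univ.biUnion C).card ≤ 1) ∧
    (∑ j, (C j).card) ≤ M.card ∧
    (∀ l, ((C l).card : ℝ) < (1 + ((k : ℝ) - 1) * β) * n / k) := by
  -- Lemma A: no edge of E lies entirely outside V(M)
  have hnoU : ∀ e ∈ E, ¬ (∀ v ∈ e, v ∉ M.biUnion id) := by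
    intro e he hcon
    have hene : e.Nonempty := by
      have h1 := hE e he ⟨0, hk⟩
      have : (e ∩ P ⟨0, hk⟩).Nonempty := Finset.card_pos.mp (by omega)
      obtain ⟨v, hv⟩ := this
      exact ⟨v, (Finset.mem_inter.mp hv).1⟩
    have heM : e ∉ M := by
      intro heM
      obtain ⟨v, hv⟩ := hene
      exact hcon v hv (Finset.mem_biUnion.mpr ⟨e, heM, hv⟩)
    have h1 : insert e M ⊆ E := by
      intro f hf
      rcases Finset.mem_insert.mp hf with rfl | hf
      · exact he
      · exact hME hf
    have hde : ∀ f ∈ M, Disjoint e f := by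
      intro f hf
      rw [Finset.disjoint_left]
      intro v hv hvf
      exact hcon v hv (Finset.mem_biUnion.mpr ⟨f, hf, hvf⟩)
    have h2 : ∀ a ∈ insert e M, ∀ b ∈ insert e M, a ≠ b → Disjoint a b := by
      intro a ha b hb hab
      rcases Finset.mem_insert.mp ha with ha' | ha'
      · rcases Finset.mem_insert.mp hb with hb' | hb'
        · exact absurd (ha'.trans hb'.symm) hab
        · exact ha' ▸ hde b hb'
      · rcases Finset.mem_insert.mp hb with hb' | hb'
        · exact hb' ▸ (hde a ha').symm
        · exact hMd a ha' b hb' hab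
    have h3 := hMmax _ h1 h2
    rw [Finset.card_insert_of_notMem heM] at h3
    omega
  -- every vertex of C j lies in V(M)
  have hCsub : ∀ j, ∀ v ∈ C j, v ∈ M.biUnion id := by
    intro j v hv
    rw [hC] at hv
    obtain ⟨hvP, i, hie⟩ := Finset.mem_filter.mp hv
    by_contra hvM
    refine hnoU _ hie ?_
    intro w hw
    rcases Finset.mem_insert.mp hw with rfl | hwA
    · exact hvM
    · exact hAU i j w hwA
  have hCmem : ∀ jj v, v ∈ C jj → v ∈ P jj ∧ ∃ i, insert v (A i jj) ∈ E := by
    intro jj v hv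
    rw [hC] at hv
    exact Finset.mem_filter.mp hv
  -- Claim 1
  have claim1 : ∀ e ∈ M, (e ∩ Finset.univ.biUnion C).card ≤ 1 := by
    intro e heM
    by_contra hcon
    push_neg at hcon
    obtain ⟨u, hu, w, hw, huw⟩ := Finset.one_lt_card.mp hcon
    obtain ⟨hue, huC⟩ := Finset.mem_inter.mp hu
    obtain ⟨hwe, hwC⟩ := Finset.mem_inter.mp hw
    obtain ⟨j, -, hujC⟩ := Finset.mem_biUnion.mp huC
    obtain ⟨j', -, hwjC⟩ := Finset.mem_biUnion.mp hwC
    obtain ⟨huP, i, hei⟩ := hCmem j u hujC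
    obtain ⟨hwP, i', hei'⟩ := hCmem j' w hwjC
    have hjj' : j ≠ j' := by
      rintro rfl
      have h1 := hE e (hME heM) j
      have := Finset.card_le_one.mp (le_of_eq h1) u
        (Finset.mem_inter.mpr ⟨hue, huP⟩) w (Finset.mem_inter.mpr ⟨hwe, hwP⟩)
      exact huw this
    have hk2 : 2 ≤ k := by
      have : 1 < Fintype.card (Fin k) := Fintype.one_lt_card_iff_nontrivial.mpr ⟨⟨j, j', hjj'⟩⟩
      simp at this; omega
    have hij : ((i, j) : Fin k × Fin k) ≠ (i', j') := by
      simp [Prod.ext_iff, hjj']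
    set e1 := insert u (A i j) with he1def
    set e2 := insert w (A i' j') with he2def
    have huM : u ∈ M.biUnion id := Finset.mem_biUnion.mpr ⟨e, heM, hue⟩
    have hwM : w ∈ M.biUnion id := Finset.mem_biUnion.mpr ⟨e, heM, hwe⟩
    have hu2 : u ∉ e2 := by
      intro h
      rcases Finset.mem_insert.mp h with h | h
      · exact huw h
      · exact hAU i' j' u h huM
    have hw1 : w ∉ e1 := by
      intro h
      rcases Finset.mem_insert.mp h with h | h
      · exact huw h.symm
      · exact hAU i j w h hwM
    have hdisj12 : Disjoint e1 e2 := by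
      rw [Finset.disjoint_left]
      intro v hv1 hv2
      rcases Finset.mem_insert.mp hv1 with rfl | hA
      · exact hu2 hv2
      · rcases Finset.mem_insert.mp hv2 with rfl | hA'
        · exact hAU i j v hA hwM
        · exact (Finset.disjoint_left.mp (hAdisj i j i' j' hij)) hA hA'
    have hdisjM : ∀ f ∈ M, f ≠ e → Disjoint e1 f ∧ Disjoint e2 f := by
      intro f hf hfe
      constructor <;> (rw [Finset.disjoint_left]; intro v hv hvf)
      · rcases Finset.mem_insert.mp hv with rfl | hA
        · exact (Finset.disjoint_left.mp (hMd e heM f hf (Ne.symm hfe))) hue hvf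
        · exact hAU i j v hA (Finset.mem_biUnion.mpr ⟨f, hf, hvf⟩)
      · rcases Finset.mem_insert.mp hv with rfl | hA
        · exact (Finset.disjoint_left.mp (hMd e heM f hf (Ne.symm hfe))) hwe hvf
        · exact hAU i' j' v hA (Finset.mem_biUnion.mpr ⟨f, hf, hvf⟩)
    have hAne : (A i j).Nonempty := by
      rw [← Finset.card_pos, hAcard]; omega
    have hAne' : (A i' j').Nonempty := by
      rw [← Finset.card_pos, hAcard]; omega
    have he1M : e1 ∉ M := by
      intro h
      obtain ⟨a, ha⟩ := hAne
      exact hAU i j a ha (Finset.mem_biUnion.mpr ⟨e1, h, Finset.mem_insert_of_mem ha⟩)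
    have he2M : e2 ∉ M := by
      intro h
      obtain ⟨a, ha⟩ := hAne'
      exact hAU i' j' a ha (Finset.mem_biUnion.mpr ⟨e2, h, Finset.mem_insert_of_mem ha⟩)
    have h12 : e1 ≠ e2 := by
      intro h
      exact hu2 (h ▸ Finset.mem_insert_self u (A i j))
    set M' := insert e1 (insert e2 (M.erase e)) with hM'def
    have hM'E : M' ⊆ E := by
      intro f hf
      rcases Finset.mem_insert.mp hf with rfl | hf
      · exact hei
      · rcases Finset.mem_insert.mp hf with rfl | hf
        · exact hei'
        · exact hME (Finset.mem_of_mem_erase hf)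
    have hM'd : ∀ a ∈ M', ∀ b ∈ M', a ≠ b → Disjoint a b := by
      intro a ha b hb hab
      rcases Finset.mem_insert.mp ha with rfl | ha
      · rcases Finset.mem_insert.mp hb with rfl | hb
        · exact absurd rfl hab
        · rcases Finset.mem_insert.mp hb with rfl | hb
          · exact hdisj12
          · exact (hdisjM b (Finset.mem_of_mem_erase hb) (Finset.ne_of_mem_erase hb)).1
      · rcases Finset.mem_insert.mp ha with rfl | ha
        · rcases Finset.mem_insert.mp hb with rfl | hb
          · exact hdisj12.symm
          · rcases Finset.mem_insert.mp hb with rfl | hb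
            · exact absurd rfl hab
            · exact (hdisjM b (Finset.mem_of_mem_erase hb) (Finset.ne_of_mem_erase hb)).2
        · rcases Finset.mem_insert.mp hb with rfl | hb
          · exact ((hdisjM a (Finset.mem_of_mem_erase ha) (Finset.ne_of_mem_erase ha)).1).symm
          · rcases Finset.mem_insert.mp hb with rfl | hb
            · exact ((hdisjM a (Finset.mem_of_mem_erase ha) (Finset.ne_of_mem_erase ha)).2).symm
            · exact hMd a (Finset.mem_of_mem_erase ha) b (Finset.mem_of_mem_erase hb) hab
    have hc := hMmax M' hM'E hM'd
    have he1ni : e1 ∉ insert e2 (M.erase e) := by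
      intro h
      rcases Finset.mem_insert.mp h with h | h
      · exact h12 h
      · exact he1M (Finset.mem_of_mem_erase h)
    have he2ni : e2 ∉ M.erase e := fun h => he2M (Finset.mem_of_mem_erase h)
    have hcard : M'.card = M.card + 1 := by
      rw [hM'def, Finset.card_insert_of_notMem he1ni,
        Finset.card_insert_of_notMem he2ni, Finset.card_erase_of_mem heM]
      have : 1 ≤ M.card := Finset.card_pos.mpr ⟨e, heM⟩
      omega
    omega
  -- Claim 2
  have hCdisj : ∀ j j', j ≠ j' → Disjoint (C j) (C j') := by
    intro j j' hjj'
    rw [Finset.disjoint_left]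
    intro v hv hv'
    obtain ⟨hvP, -⟩ := hCmem j v hv
    obtain ⟨hvP', -⟩ := hCmem j' v hv'
    obtain ⟨i0, -, huniq⟩ := hP v
    exact hjj' ((huniq j hvP).trans (huniq j' hvP').symm)
  have hsum_eq : ∑ j, (C j).card = (Finset.univ.biUnion C).card :=
    (Finset.card_biUnion (fun j _ j' _ h => hCdisj j j' h)).symm
  have hBsub : Finset.univ.biUnion C ⊆ M.biUnion (fun e => e ∩ Finset.univ.biUnion C) := by
    intro v hv
    obtain ⟨j, -, hvj⟩ := Finset.mem_biUnion.mp hv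
    obtain ⟨e, heM, hve⟩ := Finset.mem_biUnion.mp (hCsub j v hvj)
    exact Finset.mem_biUnion.mpr ⟨e, heM, Finset.mem_inter.mpr ⟨hve, hv⟩⟩
  have claim2 : (∑ j, (C j).card) ≤ M.card := by
    rw [hsum_eq]
    calc (Finset.univ.biUnion C).card
        ≤ (M.biUnion (fun e => e ∩ Finset.univ.biUnion C)).card := Finset.card_le_card hBsub
      _ ≤ ∑ e ∈ M, (e ∩ Finset.univ.biUnion C).card := Finset.card_biUnion_le
      _ ≤ ∑ e ∈ M, 1 := Finset.sum_le_sum claim1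
      _ = M.card := by simp
  refine ⟨claim1, claim2, ?_⟩
  -- Claim 3
  have hkR : (0:ℝ) < (k:ℝ) := by exact_mod_cast hk
  have hlow : ∀ j, (1 - β) * n / k < ((C j).card : ℝ) := by
    intro j
    have hS := hdeg (A ⟨0, hk⟩ j) (hAcard _ j) (hAleg _ j)
    refine lt_of_lt_of_le hS ?_
    have hsub : Finset.univ.filter (fun v => insert v (A ⟨0, hk⟩ j) ∈ E) ⊆ C j := by
      intro v hv
      have hvE : insert v (A ⟨0, hk⟩ j) ∈ E := (Finset.mem_filter.mp hv).2
      have h1 := hE _ hvE j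
      have hvP : v ∈ P j := by
        obtain ⟨x, hx⟩ := Finset.card_pos.mp (show 0 < (insert v (A ⟨0, hk⟩ j) ∩ P j).card by omega)
        obtain ⟨hx1, hx2⟩ := Finset.mem_inter.mp hx
        rcases Finset.mem_insert.mp hx1 with rfl | hxA
        · exact hx2
        · exact absurd (Finset.mem_inter.mpr ⟨hxA, hx2⟩) (by simp [hAj ⟨0, hk⟩ j])
      rw [hC]
      exact Finset.mem_filter.mpr ⟨hvP, ⟨0, hk⟩, hvE⟩
    exact_mod_cast Finset.card_le_card hsub
  intro l
  have hlsum : ((C l).card : ℝ) + ∑ j ∈ Finset.univ.erase l, ((C j).card : ℝ)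
      = ∑ j, ((C j).card : ℝ) :=
    Finset.add_sum_erase _ (fun j => ((C j).card : ℝ)) (Finset.mem_univ l)
  have herase : ∑ j ∈ Finset.univ.erase l, ((C j).card : ℝ)
      ≥ ((k:ℝ) - 1) * ((1 - β) * n / k) := by
    have hbound : ∀ j ∈ Finset.univ.erase l, (1 - β) * n / k ≤ ((C j).card : ℝ) :=
      fun j _ => le_of_lt (hlow j)
    calc ∑ j ∈ Finset.univ.erase l, ((C j).card : ℝ)
        ≥ ∑ _j ∈ Finset.univ.erase l, ((1 - β) * n / k) := Finset.sum_le_sum hbound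
      _ = ((Finset.univ.erase l).card : ℝ) * ((1 - β) * n / k) := by
          rw [Finset.sum_const, nsmul_eq_mul]
      _ = ((k:ℝ) - 1) * ((1 - β) * n / k) := by
          rw [Finset.card_erase_of_mem (Finset.mem_univ l)]
          simp [Nat.cast_sub hk]
  have hsumn : ∑ j, ((C j).card : ℝ) < (n : ℝ) := by
    have : ((∑ j, (C j).card : ℕ) : ℝ) < (n : ℝ) := by
      exact_mod_cast lt_of_le_of_lt claim2 hm
    simpa [Nat.cast_sum] using this
  have hfinal : ((C l).card : ℝ) < (n:ℝ) - ((k:ℝ) - 1) * ((1 - β) * n / k) := by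
    have := hlsum
    nlinarith [herase, hsumn]
  have heq : (n:ℝ) - ((k:ℝ) - 1) * ((1 - β) * n / k) = (1 + ((k : ℝ) - 1) * β) * n / k := by
    field_simp
    ring
  linarith [hfinal, le_of_eq heq]
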